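/- Let B ⊆ ℂ² be a convex open set, G : B → ℂ² holomorphic, and suppose there is C > 0 such that ‖DG(p)v‖ ≥ C‖v‖ for all p ∈ B and v ∈ ℂ². If G is injective on B, then for any closed ball B̄(p₀, ρ) ⊆ B, the image G(B) contains the open ball of radius Cρ centered at G(p₀). -/

import Mathlib

open Metric Set Filter
open scoped Topology

set_option maxHeartbeats 1000000

noncomputable section

/-- Continuity of the first partial derivative of a holomorphic function of two
complex variables, proved via one-variable Cauchy estimates on slices. -/
lemma contD1_aux (B : Set (ℂ × ℂ)) (hBo : IsOpen B)
    (G : ℂ × ℂ → ℂ × ℂ) (hG : DifferentiableOn ℂ G B)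
    (p₁ : ℂ × ℂ) (hp₁ : p₁ ∈ B) :
    ContinuousAt (fun p => fderiv ℂ G p ((1 : ℂ), (0 : ℂ))) p₁ := by
  set D : ℂ × ℂ → ℂ × ℂ := fun p => fderiv ℂ G p ((1 : ℂ), (0 : ℂ)) with hD
  -- slice derivative fact
  have slice : ∀ p ∈ B, HasDerivAt (fun z => G (z, p.2)) (D p) p.1 := by
    intro p hp
    have hd := (hG.differentiableAt (hBo.mem_nhds hp)).hasFDerivAt
    have h1 : HasDerivAt (fun z : ℂ => (z, p.2)) ((1 : ℂ), (0 : ℂ)) p.1 :=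
      (hasDerivAt_id p.1).prodMk (hasDerivAt_const p.1 p.2)
    exact hd.comp_hasDerivAt p.1 h1
  obtain ⟨R, hR0, hRB⟩ := nhds_basis_closedBall.mem_iff.1 (hBo.mem_nhds hp₁)
  set a := p₁.1 with ha
  set b := p₁.2 with hb
  set r : ℝ := R / 3 with hr
  have hr0 : 0 < r := by positivity
  have h3r : 3 * r = R := by rw [hr]; ring
  have hmem : ∀ z w : ℂ, dist z a ≤ 3 * r → dist w b ≤ 3 * r → (z, w) ∈ B := by
    intro z w hz hw
    apply hRB
    rw [mem_closedBall, Prod.dist_eq]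
    exact max_le (by rw [← h3r]; exact hz) (by rw [← h3r]; exact hw)
  obtain ⟨M₀, hM₀⟩ := (isCompact_closedBall p₁ R).exists_bound_of_continuousOn
    (hG.continuousOn.mono hRB)
  set M : ℝ := max M₀ 0 with hM
  have hMnn : 0 ≤ M := le_max_right _ _
  have hMb : ∀ z w : ℂ, dist z a ≤ 3 * r → dist w b ≤ 3 * r → ‖G (z, w)‖ ≤ M := by
    intro z w hz hw
    refine le_trans (hM₀ _ ?_) (le_max_left _ _)
    rw [mem_closedBall, Prod.dist_eq]
    exact max_le (by rw [← h3r]; exact hz) (by rw [← h3r]; exact hw)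
  set L : ℝ := M / r / r with hL
  have hLnn : 0 ≤ L := by positivity
  -- for each w close to b, study the slice z ↦ G (z, w)
  have key : ∀ w : ℂ, dist w b ≤ r →
      (∀ z z' : ℂ, dist z a ≤ r → dist z' a ≤ r →
        ‖D (z, w) - D (z', w)‖ ≤ L * ‖z - z'‖) := by
    intro w hw
    set g : ℂ → ℂ × ℂ := fun z => G (z, w) with hg
    have hmemw : ∀ z : ℂ, dist z a ≤ 3 * r → (z, w) ∈ B := fun z hz =>
      hmem z w hz (hw.trans (by linarith))
    have hgdiff : DifferentiableOn ℂ g (closedBall a (3 * r)) := by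
      intro z hz
      exact ((slice (z, w) (hmemw z (mem_closedBall.1 hz))).differentiableAt).differentiableWithinAt
    have hgd : ∀ z : ℂ, dist z a ≤ 3 * r → deriv g z = D (z, w) := by
      intro z hz
      exact (slice (z, w) (hmemw z hz)).deriv
    set φ : ℂ → ℂ × ℂ := deriv g with hφ
    have hφdiff : DifferentiableOn ℂ φ (ball a (3 * r)) :=
      (((hgdiff.mono ball_subset_closedBall).analyticOnNhd isOpen_ball).deriv).differentiableOn
    -- first Cauchy estimate : ‖φ‖ ≤ M / r on closedBall a (2r)
    have bound1 : ∀ ξ : ℂ, dist ξ a ≤ 2 * r → ‖φ ξ‖ ≤ M / r := by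
      intro ξ hξ
      apply Complex.norm_deriv_le_of_forall_mem_sphere_norm_le hr0
      · exact hgdiff.diffContOnCl_ball (fun ζ hζ => mem_closedBall.2 (by
          have := mem_closedBall.1 hζ
          calc dist ζ a ≤ dist ζ ξ + dist ξ a := dist_triangle _ _ _
            _ ≤ r + 2 * r := add_le_add this hξ
            _ = 3 * r := by ring))
      · intro z hz
        have hz' : dist z ξ = r := mem_sphere.1 hz
        exact hMb z w (by
          calc dist z a ≤ dist z ξ + dist ξ a := dist_triangle _ _ _
            _ ≤ r + 2 * r := add_le_add hz'.le hξ
            _ = 3 * r := by ring) (hw.trans (by linarith))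
    -- second Cauchy estimate : ‖deriv φ‖ ≤ L on closedBall a r
    have bound2 : ∀ ζ : ℂ, dist ζ a ≤ r → ‖deriv φ ζ‖ ≤ L := by
      intro ζ hζ
      rw [hL]
      apply Complex.norm_deriv_le_of_forall_mem_sphere_norm_le hr0
      · exact hφdiff.diffContOnCl_ball (fun ξ hξ => mem_ball.2 (by
          have := mem_closedBall.1 hξ
          calc dist ξ a ≤ dist ξ ζ + dist ζ a := dist_triangle _ _ _
            _ ≤ r + r := add_le_add this hζ
            _ < 3 * r := by linarith))
      · intro ξ hξ
        have hξ' : dist ξ ζ = r := mem_sphere.1 hξ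
        exact bound1 ξ (by
          calc dist ξ a ≤ dist ξ ζ + dist ζ a := dist_triangle _ _ _
            _ ≤ r + r := add_le_add hξ'.le hζ
            _ = 2 * r := by ring)
    -- mean value on closedBall a r
    intro z z' hz hz'
    have hlip : ‖φ z - φ z'‖ ≤ L * ‖z - z'‖ := by
      apply Convex.norm_image_sub_le_of_norm_hasDerivWithin_le
        (f' := fun x => deriv φ x) (s := closedBall a r)
      · intro x hx
        have hx3 : x ∈ ball a (3 * r) := by
          rw [mem_ball]
          exact lt_of_le_of_lt (mem_closedBall.1 hx) (by linarith)
        exact ((hφdiff.differentiableAt (isOpen_ball.mem_nhds hx3)).hasDerivAt).hasDerivWithinAt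
      · intro x hx
        exact bound2 x (mem_closedBall.1 hx)
      · exact convex_closedBall a r
      · exact mem_closedBall.2 hz'
      · exact mem_closedBall.2 hz
    rw [← hgd z (by linarith), ← hgd z' (by linarith)]
    exact hlip
  -- difference quotient estimate
  have quot : ∀ w : ℂ, dist w b ≤ r → ∀ h : ℂ, ‖h‖ ≤ r →
      ‖G (a + h, w) - G (a, w) - h • D (a, w)‖ ≤ L * ‖h‖ * ‖h‖ := by
    intro w hw h hh
    set c : ℂ × ℂ := D (a, w) with hc
    set ψ : ℂ → ℂ × ℂ := fun ζ => G (ζ, w) - ζ • c with hψ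
    have hmemw : ∀ z : ℂ, dist z a ≤ 3 * r → (z, w) ∈ B := fun z hz =>
      hmem z w hz (hw.trans (by linarith))
    have hderivs : ∀ x ∈ closedBall a ‖h‖,
        HasDerivWithinAt ψ (D (x, w) - c) (closedBall a ‖h‖) x := by
      intro x hx
      have hx' : dist x a ≤ r := le_trans (mem_closedBall.1 hx) hh
      have h1 : HasDerivAt (fun ζ => G (ζ, w)) (D (x, w)) x :=
        slice (x, w) (hmemw x (by linarith))
      have h2 : HasDerivAt (fun ζ : ℂ => ζ • c) c x := by
        simpa using (hasDerivAt_id x).smul_const c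
      exact ((h1.sub h2).hasDerivWithinAt)
    have hbounds : ∀ x ∈ closedBall a ‖h‖, ‖D (x, w) - c‖ ≤ L * ‖h‖ := by
      intro x hx
      have hx' : dist x a ≤ r := le_trans (mem_closedBall.1 hx) hh
      calc ‖D (x, w) - c‖ = ‖D (x, w) - D (a, w)‖ := by rw [hc]
        _ ≤ L * ‖x - a‖ := key w hw x a hx' (by simp [hr0.le])
        _ ≤ L * ‖h‖ := by
            apply mul_le_mul_of_nonneg_left _ hLnn
            rw [← dist_eq_norm]
            exact mem_closedBall.1 hx
    have hxs : a ∈ closedBall a ‖h‖ := mem_closedBall_self (norm_nonneg h)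
    have hys : a + h ∈ closedBall a ‖h‖ := by
      rw [mem_closedBall, dist_eq_norm]; simp
    have hstep0 := Convex.norm_image_sub_le_of_norm_hasDerivWithin_le hderivs hbounds
      (convex_closedBall a ‖h‖) hxs hys
    have hstep : ‖ψ (a + h) - ψ a‖ ≤ L * ‖h‖ * ‖h‖ := by
      have : ‖a + h - a‖ = ‖h‖ := by simp
      rwa [this] at hstep0
    have heq : ψ (a + h) - ψ a = G (a + h, w) - G (a, w) - h • c := by
      rw [hψ]
      simp only [add_smul]
      abel
    rwa [heq] at hstep
  -- now prove continuity
  rw [Metric.continuousAt_iff']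
  intro ε hε
  -- choose the step size t
  set t : ℝ := min r (ε / (8 * (L + 1))) with ht
  have ht0 : 0 < t := lt_min hr0 (by positivity)
  have htr : t ≤ r := min_le_left _ _
  have hLt : L * t ≤ ε / 8 := by
    have h1 : t ≤ ε / (8 * (L + 1)) := min_le_right _ _
    have h2 : L * t ≤ L * (ε / (8 * (L + 1))) := mul_le_mul_of_nonneg_left h1 hLnn
    have h3 : L * (ε / (8 * (L + 1))) ≤ ε / 8 := by
      rw [mul_comm, div_mul_eq_mul_div, div_le_div_iff₀ (by positivity) (by norm_num)]
      nlinarith [hLnn, hε.le]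
    linarith
  set hstep : ℂ := (t : ℂ) with hhstep
  have hnorm : ‖hstep‖ = t := by
    rw [hhstep, Complex.norm_real, Real.norm_eq_abs, abs_of_pos ht0]
  have hne : hstep ≠ 0 := by
    simpa [hhstep, Complex.ofReal_ne_zero] using ht0.ne'
  set Q : ℂ → ℂ × ℂ := fun w => hstep⁻¹ • (G (a + hstep, w) - G (a, w)) with hQ
  -- Q approximates D (a, ·) up to L * t
  have hQapprox : ∀ w : ℂ, dist w b ≤ r → ‖Q w - D (a, w)‖ ≤ L * t := by
    intro w hw
    have h1 := quot w hw hstep (by rw [hnorm]; exact htr)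
    have h2 : Q w - D (a, w) = hstep⁻¹ • (G (a + hstep, w) - G (a, w) - hstep • D (a, w)) := by
      rw [hQ]
      rw [smul_sub, smul_smul, inv_mul_cancel₀ hne, one_smul]
    rw [h2, norm_smul, norm_inv, hnorm]
    rw [hnorm] at h1
    calc t⁻¹ * ‖G (a + hstep, w) - G (a, w) - hstep • D (a, w)‖
        ≤ t⁻¹ * (L * t * t) := by
          apply mul_le_mul_of_nonneg_left h1 (by positivity)
      _ = L * t := by field_simp
  -- Q is continuous at b
  have hQcont : ContinuousAt Q b := by
    have hc1 : ContinuousAt (fun w : ℂ => G (a + hstep, w)) b := by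
      have hmem1 : (a + hstep, b) ∈ B := by
        apply hmem
        · rw [dist_eq_norm]
          simp only [add_sub_cancel_left]
          rw [hnorm]; linarith
        · rw [dist_self]; positivity
      have := (hG.differentiableAt (hBo.mem_nhds hmem1)).continuousAt
      exact this.comp ((continuous_const.prodMk continuous_id).continuousAt)
    have hc2 : ContinuousAt (fun w : ℂ => G (a, w)) b := by
      have hmem2 : (a, b) ∈ B := by rw [ha, hb]; exact hp₁
      have := (hG.differentiableAt (hBo.mem_nhds hmem2)).continuousAt
      exact this.comp ((continuous_const.prodMk continuous_id).continuousAt)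
    show ContinuousAt (fun w => hstep⁻¹ • (G (a + hstep, w) - G (a, w))) b
    exact (continuousAt_const (y := hstep⁻¹)).smul (hc1.sub hc2)
  have hQev : ∀ᶠ w in 𝓝 b, dist (Q w) (Q b) < ε / 8 :=
    Metric.tendsto_nhds.1 hQcont (ε / 8) (by positivity)
  -- assemble the eventual estimate
  have e1 : ∀ᶠ p : ℂ × ℂ in 𝓝 p₁, dist p.1 a ≤ t := by
    have : ∀ᶠ z in 𝓝 a, dist z a ≤ t := by
      filter_upwards [Metric.closedBall_mem_nhds a ht0] with z hz
      exact mem_closedBall.1 hz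
    exact (continuous_fst.continuousAt : ContinuousAt Prod.fst p₁).eventually this
  have e2 : ∀ᶠ p : ℂ × ℂ in 𝓝 p₁, dist p.2 b ≤ r := by
    have : ∀ᶠ w in 𝓝 b, dist w b ≤ r := by
      filter_upwards [Metric.closedBall_mem_nhds b hr0] with w hw
      exact mem_closedBall.1 hw
    exact (continuous_snd.continuousAt : ContinuousAt Prod.snd p₁).eventually this
  have e3 : ∀ᶠ p : ℂ × ℂ in 𝓝 p₁, dist (Q p.2) (Q b) < ε / 8 :=
    (continuous_snd.continuousAt : ContinuousAt Prod.snd p₁).eventually hQev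
  filter_upwards [e1, e2, e3] with p h1 h2 h3
  have hDp : D p = D (p.1, p.2) := by rw [Prod.mk.eta]
  have hDp₁ : D p₁ = D (a, b) := by rw [ha, hb, Prod.mk.eta]
  have T1 : dist (D p) (D (a, p.2)) ≤ L * t := by
    rw [hDp, dist_eq_norm]
    calc ‖D (p.1, p.2) - D (a, p.2)‖ ≤ L * ‖p.1 - a‖ :=
          key p.2 h2 p.1 a (h1.trans htr) (by simp [hr0.le])
      _ ≤ L * t := by
          apply mul_le_mul_of_nonneg_left _ hLnn
          rw [← dist_eq_norm]; exact h1
  have T2 : dist (D (a, p.2)) (Q p.2) ≤ L * t := by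
    rw [dist_comm, dist_eq_norm]
    exact hQapprox p.2 h2
  have T4 : dist (Q b) (D p₁) ≤ L * t := by
    rw [hDp₁, dist_eq_norm]
    exact hQapprox b (by simp [hr0.le])
  calc dist (D p) (D p₁)
      ≤ dist (D p) (D (a, p.2)) + dist (D (a, p.2)) (Q p.2) + dist (Q p.2) (Q b)
        + dist (Q b) (D p₁) := by
          have s1 := dist_triangle4 (D p) (D (a, p.2)) (Q p.2) (D p₁)
          have s2 := dist_triangle (Q p.2) (Q b) (D p₁)
          linarith
    _ ≤ L * t + L * t + ε / 8 + L * t := by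
        exact add_le_add (add_le_add (add_le_add T1 T2) h3.le) T4
    _ ≤ ε / 8 + ε / 8 + ε / 8 + ε / 8 := by linarith
    _ < ε := by linarith

/-- Continuity of the full derivative. -/
lemma fderiv_continuousAt_aux (B : Set (ℂ × ℂ)) (hBo : IsOpen B)
    (G : ℂ × ℂ → ℂ × ℂ) (hG : DifferentiableOn ℂ G B)
    (p₁ : ℂ × ℂ) (hp₁ : p₁ ∈ B) :
    ContinuousAt (fderiv ℂ G) p₁ := by
  -- first partial derivative
  have hD1 : ContinuousAt (fun p => fderiv ℂ G p ((1 : ℂ), (0 : ℂ))) p₁ :=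
    contD1_aux B hBo G hG p₁ hp₁
  -- second partial derivative via swap
  set σ : (ℂ × ℂ) ≃L[ℂ] (ℂ × ℂ) := ContinuousLinearEquiv.prodComm ℂ ℂ ℂ with hσ
  have hσc : Continuous (σ : ℂ × ℂ → ℂ × ℂ) := σ.continuous
  set B' : Set (ℂ × ℂ) := (σ : ℂ × ℂ → ℂ × ℂ) ⁻¹' B with hB'
  have hB'o : IsOpen B' := hBo.preimage hσc
  set G2 : ℂ × ℂ → ℂ × ℂ := fun q => G (σ q) with hG2
  have hG2diff : DifferentiableOn ℂ G2 B' := by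
    intro q hq
    exact ((hG.differentiableAt (hBo.mem_nhds hq)).comp q
      σ.differentiable.differentiableAt).differentiableWithinAt
  have hfd : ∀ q ∈ B', fderiv ℂ G2 q = (fderiv ℂ G (σ q)).comp (σ : (ℂ × ℂ) →L[ℂ] (ℂ × ℂ)) := by
    intro q hq
    have h1 := (hG.differentiableAt (hBo.mem_nhds hq)).hasFDerivAt
    have h2 : HasFDerivAt (σ : ℂ × ℂ → ℂ × ℂ) (σ : (ℂ × ℂ) →L[ℂ] (ℂ × ℂ)) q :=
      σ.toContinuousLinearMap.hasFDerivAt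
    exact (h1.comp q h2).fderiv
  have hp₁' : σ.symm p₁ ∈ B' := by
    rw [hB', mem_preimage]
    simp only [ContinuousLinearEquiv.apply_symm_apply]
    exact hp₁
  have hD1' : ContinuousAt (fun q => fderiv ℂ G2 q ((1 : ℂ), (0 : ℂ))) (σ.symm p₁) :=
    contD1_aux B' hB'o G2 hG2diff (σ.symm p₁) hp₁'
  have hD2 : ContinuousAt (fun p => fderiv ℂ G p ((0 : ℂ), (1 : ℂ))) p₁ := by
    have hcomp : ContinuousAt ((fun q => fderiv ℂ G2 q ((1 : ℂ), (0 : ℂ))) ∘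
        (σ.symm : ℂ × ℂ → ℂ × ℂ)) p₁ := by
      apply hD1'.comp
      exact σ.symm.continuous.continuousAt
    apply hcomp.congr
    filter_upwards [hBo.mem_nhds hp₁] with p hp
    have hqB' : σ.symm p ∈ B' := by
      rw [hB', mem_preimage]
      simp only [ContinuousLinearEquiv.apply_symm_apply]
      exact hp
    simp only [Function.comp_apply]
    rw [hfd _ hqB']
    simp only [ContinuousLinearMap.coe_comp', Function.comp_apply,
      ContinuousLinearEquiv.coe_coe, ContinuousLinearEquiv.apply_symm_apply]
    congr 1
  -- assemble
  have hrepr : ∀ p ∈ B, fderiv ℂ G p =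
      (ContinuousLinearMap.fst ℂ ℂ ℂ).smulRight (fderiv ℂ G p ((1 : ℂ), (0 : ℂ)))
      + (ContinuousLinearMap.snd ℂ ℂ ℂ).smulRight (fderiv ℂ G p ((0 : ℂ), (1 : ℂ))) := by
    intro p hp
    apply ContinuousLinearMap.ext
    intro v
    have hv : v = v.1 • ((1 : ℂ), (0 : ℂ)) + v.2 • ((0 : ℂ), (1 : ℂ)) := by
      simp [Prod.ext_iff]
    conv_lhs => rw [hv]
    rw [map_add, map_smul, map_smul]
    simp [ContinuousLinearMap.smulRight_apply]
  have hcont : ContinuousAt (fun p =>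
      (ContinuousLinearMap.fst ℂ ℂ ℂ).smulRight (fderiv ℂ G p ((1 : ℂ), (0 : ℂ)))
      + (ContinuousLinearMap.snd ℂ ℂ ℂ).smulRight (fderiv ℂ G p ((0 : ℂ), (1 : ℂ)))) p₁ := by
    apply ContinuousAt.add
    · exact ((ContinuousLinearMap.smulRightL ℂ (ℂ × ℂ) (ℂ × ℂ)
        (ContinuousLinearMap.fst ℂ ℂ ℂ)).continuous.continuousAt).comp hD1
    · exact ((ContinuousLinearMap.smulRightL ℂ (ℂ × ℂ) (ℂ × ℂ)
        (ContinuousLinearMap.snd ℂ ℂ ℂ)).continuous.continuousAt).comp hD2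
  apply hcont.congr
  filter_upwards [hBo.mem_nhds hp₁] with p hp
  exact (hrepr p hp).symm

/-- If `G` is holomorphic and injective on a convex open set `B ⊆ ℂ²` with uniform
lower bound `‖DG(p)v‖ ≥ C‖v‖`, then for any closed ball `B̄(p₀,ρ) ⊆ B` the image
`G(B)` contains the open ball of radius `Cρ` centered at `G(p₀)`. -/
theorem image_contains_ball_of_expansive
    (B : Set (ℂ × ℂ)) (hBc : Convex ℝ B) (hBo : IsOpen B)
    (G : ℂ × ℂ → ℂ × ℂ) (hG : DifferentiableOn ℂ G B)
    (C : ℝ) (hC : 0 < C)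
    (hlow : ∀ p ∈ B, ∀ v : ℂ × ℂ, C * ‖v‖ ≤ ‖fderiv ℂ G p v‖)
    (hinj : Set.InjOn G B)
    (p₀ : ℂ × ℂ) (ρ : ℝ) (hρ : 0 < ρ) (hball : Metric.closedBall p₀ ρ ⊆ B) :
    Metric.ball (G p₀) (C * ρ) ⊆ G '' B := by
  have hp₀B : p₀ ∈ B := hball (mem_closedBall_self hρ.le)
  have hstrict : ∀ p ∈ B, HasStrictFDerivAt G (fderiv ℂ G p) p := by
    intro p hp
    apply hasStrictFDerivAt_of_hasFDerivAt_of_continuousAt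
    · filter_upwards [hBo.mem_nhds hp] with y hy
      exact (hG.differentiableAt (hBo.mem_nhds hy)).hasFDerivAt
    · exact fderiv_continuousAt_aux B hBo G hG p hp
  intro q hq
  rcases eq_or_ne q (G p₀) with rfl | hqne
  · exact ⟨p₀, hp₀B, rfl⟩
  set d : ℝ := ‖q - G p₀‖ with hd
  have hd0 : 0 < d := by
    rw [hd, norm_pos_iff]
    exact sub_ne_zero.2 hqne
  have hdlt : d < C * ρ := by
    rw [hd, ← dist_eq_norm]
    exact mem_ball.1 hq
  set d' : ℝ := (d + C * ρ) / 2 with hd'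
  have hdd' : d < d' := by rw [hd']; linarith
  have hd'lt : d' < C * ρ := by rw [hd']; linarith
  have hd'0 : 0 < d' := lt_trans hd0 hdd'
  set r : ℝ := d' / C with hrdef
  have hr0 : 0 < r := by positivity
  have hrρ : r < ρ := by
    rw [hrdef, div_lt_iff₀ hC]
    linarith [hd'lt]
  set γ : ℝ → ℂ × ℂ := fun t => G p₀ + t • (q - G p₀) with hγ
  have hγc : Continuous γ := continuous_const.add (continuous_id.smul continuous_const)
  set S : Set ℝ := {t | t ∈ Icc (0 : ℝ) 1 ∧ ∃ p : ℂ × ℂ, ‖p - p₀‖ ≤ r * t ∧ G p = γ t} with hS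
  -- compactness of S
  set K : Set (ℝ × (ℂ × ℂ)) := Icc (0 : ℝ) 1 ×ˢ closedBall p₀ r with hK
  have hKc : IsCompact K := isCompact_Icc.prod (isCompact_closedBall _ _)
  have hKB : ∀ x ∈ K, x.2 ∈ B := fun x hx =>
    hball (closedBall_subset_closedBall hrρ.le hx.2)
  have hFc : ContinuousOn (fun x : ℝ × (ℂ × ℂ) => G x.2 - γ x.1) K := by
    apply ContinuousOn.sub
    · exact (hG.continuousOn.comp continuous_snd.continuousOn hKB)
    · exact (hγc.comp continuous_fst).continuousOn
  have hZ1 : IsClosed (K ∩ (fun x : ℝ × (ℂ × ℂ) => G x.2 - γ x.1) ⁻¹' {0}) := by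
    apply hFc.preimage_isClosed_of_isClosed
    · exact (isClosed_Icc).prod Metric.isClosed_closedBall
    · exact isClosed_singleton
  set Z : Set (ℝ × (ℂ × ℂ)) :=
    (K ∩ (fun x : ℝ × (ℂ × ℂ) => G x.2 - γ x.1) ⁻¹' {0})
      ∩ {x : ℝ × (ℂ × ℂ) | ‖x.2 - p₀‖ ≤ r * x.1} with hZ
  have hZclosed : IsClosed Z := by
    apply hZ1.inter
    apply isClosed_le
    · exact (continuous_snd.sub continuous_const).norm
    · exact continuous_const.mul continuous_fst
  have hZcompact : IsCompact Z :=
    hKc.of_isClosed_subset hZclosed (fun x hx => hx.1.1)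
  have hSZ : S = Prod.fst '' Z := by
    ext t
    constructor
    · rintro ⟨ht01, p, hp1, hp2⟩
      refine ⟨(t, p), ⟨⟨⟨ht01, ?_⟩, ?_⟩, hp1⟩, rfl⟩
      · rw [mem_closedBall, dist_eq_norm]
        calc ‖p - p₀‖ ≤ r * t := hp1
          _ ≤ r * 1 := by
              apply mul_le_mul_of_nonneg_left ht01.2 hr0.le
          _ = r := mul_one r
      · simp only [mem_preimage, mem_singleton_iff]
        rw [hp2]; simp
    · rintro ⟨⟨t', p⟩, ⟨⟨⟨ht01, _⟩, hGp⟩, hp1⟩, rfl⟩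
      refine ⟨ht01, p, hp1, ?_⟩
      simp only [mem_preimage, mem_singleton_iff] at hGp
      exact sub_eq_zero.1 hGp
  have hScompact : IsCompact S := by
    rw [hSZ]
    exact hZcompact.image continuous_fst
  have h0S : (0 : ℝ) ∈ S := by
    refine ⟨⟨le_refl 0, zero_le_one⟩, p₀, ?_, ?_⟩
    · simp
    · rw [hγ]; simp
  have hSne : S.Nonempty := ⟨0, h0S⟩
  have hbdd : BddAbove S := ⟨1, fun t ht => ht.1.2⟩
  set T : ℝ := sSup S with hTdef
  have hTS : T ∈ S := hScompact.sSup_mem hSne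
  obtain ⟨hT01, pstar, hpstar1, hpstar2⟩ := hTS
  have hpstar_r : ‖pstar - p₀‖ ≤ r := by
    calc ‖pstar - p₀‖ ≤ r * T := hpstar1
      _ ≤ r * 1 := mul_le_mul_of_nonneg_left hT01.2 hr0.le
      _ = r := mul_one r
  have hpstarB : pstar ∈ B := by
    apply hball
    rw [mem_closedBall, dist_eq_norm]
    exact hpstar_r.trans hrρ.le
  by_cases hT1 : T = 1
  · refine ⟨pstar, hpstarB, ?_⟩
    rw [hpstar2, hT1, hγ]
    simp
  have hTlt : T < 1 := lt_of_le_of_ne hT01.2 hT1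
  exfalso
  -- inverse function theorem at pstar
  have hfinj : Function.Injective (fderiv ℂ G pstar) := by
    intro v w hvw
    have h1 : C * ‖v - w‖ ≤ ‖fderiv ℂ G pstar (v - w)‖ := hlow pstar hpstarB _
    rw [map_sub, hvw, sub_self, norm_zero] at h1
    have h2 : ‖v - w‖ ≤ 0 := by
      by_contra h3
      push_neg at h3
      nlinarith
    rw [← sub_eq_zero]
    exact norm_le_zero_iff.1 h2
  have hfinj' : Function.Injective ((fderiv ℂ G pstar) : (ℂ × ℂ) →ₗ[ℂ] (ℂ × ℂ)) := hfinj
  have hfsurj : Function.Surjective ((fderiv ℂ G pstar) : (ℂ × ℂ) →ₗ[ℂ] (ℂ × ℂ)) :=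
    LinearMap.injective_iff_surjective.1 hfinj'
  set e₀ : (ℂ × ℂ) ≃ₗ[ℂ] (ℂ × ℂ) :=
    LinearEquiv.ofBijective ((fderiv ℂ G pstar) : (ℂ × ℂ) →ₗ[ℂ] (ℂ × ℂ)) ⟨hfinj', hfsurj⟩
    with he₀
  set e : (ℂ × ℂ) ≃L[ℂ] (ℂ × ℂ) := e₀.toContinuousLinearEquiv with he
  have hecoe : ∀ v, e v = fderiv ℂ G pstar v := by
    intro v
    rw [he]
    have h1 : (e₀.toContinuousLinearEquiv : (ℂ × ℂ) → (ℂ × ℂ)) = e₀ :=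
      LinearEquiv.coe_toContinuousLinearEquiv' e₀
    rw [show (e₀.toContinuousLinearEquiv) v = (e₀.toContinuousLinearEquiv : (ℂ × ℂ) → (ℂ × ℂ)) v
      from rfl, h1]
    rfl
  have hecoeL : (e : (ℂ × ℂ) →L[ℂ] (ℂ × ℂ)) = fderiv ℂ G pstar := by
    apply ContinuousLinearMap.ext
    intro v
    exact hecoe v
  have hstrict' : HasStrictFDerivAt G ((e : (ℂ × ℂ) →L[ℂ] (ℂ × ℂ))) pstar := by
    rw [hecoeL]
    exact hstrict pstar hpstarB
  -- the local inverse
  set H : ℂ × ℂ → ℂ × ℂ := HasStrictFDerivAt.localInverse G e pstar hstrict' with hH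
  have hright : ∀ᶠ y in 𝓝 (G pstar), G (H y) = y := hstrict'.eventually_right_inverse
  have himg : H (G pstar) = pstar := hstrict'.localInverse_apply_image
  have hder : HasFDerivAt H ((e.symm : (ℂ × ℂ) →L[ℂ] (ℂ × ℂ))) (G pstar) :=
    hstrict'.to_localInverse.hasFDerivAt
  -- bound for e.symm
  have hesymm : ∀ w : ℂ × ℂ, ‖e.symm w‖ ≤ ‖w‖ / C := by
    intro w
    have h1 : C * ‖e.symm w‖ ≤ ‖fderiv ℂ G pstar (e.symm w)‖ := hlow pstar hpstarB _
    rw [← hecoe, e.apply_symm_apply] at h1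
    rw [le_div_iff₀ hC]
    linarith
  -- the little-o estimate
  set ε' : ℝ := (d' - d) / (C * d) with hε'
  have hε'0 : 0 < ε' := by
    apply div_pos (by linarith) (by positivity)
  have hrsum : d / C + ε' * d = r := by
    rw [hε', hrdef]
    field_simp
    ring
  have hlittle : ∀ᶠ y in 𝓝 (G pstar),
      ‖H y - H (G pstar) - (e.symm : (ℂ × ℂ) →L[ℂ] (ℂ × ℂ)) (y - G pstar)‖
        ≤ ε' * ‖y - G pstar‖ := hder.isLittleO.def hε'0
  have hγT : G pstar = γ T := hpstar2
  have hev : ∀ᶠ y in 𝓝 (γ T), G (H y) = y ∧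
      ‖H y - pstar - (e.symm : (ℂ × ℂ) →L[ℂ] (ℂ × ℂ)) (y - γ T)‖ ≤ ε' * ‖y - γ T‖ := by
    rw [← hγT]
    filter_upwards [hright, hlittle] with y h1 h2
    refine ⟨h1, ?_⟩
    rwa [himg] at h2
  have hevt : ∀ᶠ t in 𝓝 T, G (H (γ t)) = γ t ∧
      ‖H (γ t) - pstar - (e.symm : (ℂ × ℂ) →L[ℂ] (ℂ × ℂ)) (γ t - γ T)‖
        ≤ ε' * ‖γ t - γ T‖ := hγc.continuousAt.eventually hev
  obtain ⟨δ, hδ0, hδ⟩ := Metric.eventually_nhds_iff.1 hevt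
  set t : ℝ := min 1 (T + δ / 2) with htdef
  have hTt : T < t := lt_min hTlt (by linarith)
  have ht1 : t ≤ 1 := min_le_left _ _
  have htT : t - T ≤ δ / 2 := by
    have : t ≤ T + δ / 2 := min_le_right _ _
    linarith
  have htdist : dist t T < δ := by
    rw [Real.dist_eq, abs_of_pos (by linarith)]
    linarith
  obtain ⟨hGH, hest⟩ := hδ htdist
  set p : ℂ × ℂ := H (γ t) with hp
  have hΔ : γ t - γ T = (t - T) • (q - G p₀) := by
    rw [hγ]
    simp only [add_sub_add_left_eq_sub, ← sub_smul]
  have hΔnorm : ‖γ t - γ T‖ = (t - T) * d := by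
    rw [hΔ, norm_smul, Real.norm_eq_abs, abs_of_pos (by linarith), hd]
  have hbound : ‖p - p₀‖ ≤ r * t := by
    have h1 : ‖p - pstar - (e.symm : (ℂ × ℂ) →L[ℂ] (ℂ × ℂ)) (γ t - γ T)‖
        ≤ ε' * ((t - T) * d) := by
      rw [← hΔnorm]; exact hest
    have h2 : ‖(e.symm : (ℂ × ℂ) →L[ℂ] (ℂ × ℂ)) (γ t - γ T)‖ ≤ (t - T) * d / C := by
      calc ‖(e.symm : (ℂ × ℂ) →L[ℂ] (ℂ × ℂ)) (γ t - γ T)‖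
          ≤ ‖γ t - γ T‖ / C := hesymm _
        _ = (t - T) * d / C := by rw [hΔnorm]
    have heq : p - p₀ = (p - pstar - (e.symm : (ℂ × ℂ) →L[ℂ] (ℂ × ℂ)) (γ t - γ T))
        + (e.symm : (ℂ × ℂ) →L[ℂ] (ℂ × ℂ)) (γ t - γ T) + (pstar - p₀) := by abel
    calc ‖p - p₀‖ ≤ ‖(p - pstar - (e.symm : (ℂ × ℂ) →L[ℂ] (ℂ × ℂ)) (γ t - γ T))
          + (e.symm : (ℂ × ℂ) →L[ℂ] (ℂ × ℂ)) (γ t - γ T)‖ + ‖pstar - p₀‖ := by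
          rw [heq]; exact norm_add_le _ _
      _ ≤ ‖p - pstar - (e.symm : (ℂ × ℂ) →L[ℂ] (ℂ × ℂ)) (γ t - γ T)‖
          + ‖(e.symm : (ℂ × ℂ) →L[ℂ] (ℂ × ℂ)) (γ t - γ T)‖ + ‖pstar - p₀‖ := by
          have := norm_add_le (p - pstar - (e.symm : (ℂ × ℂ) →L[ℂ] (ℂ × ℂ)) (γ t - γ T))
            ((e.symm : (ℂ × ℂ) →L[ℂ] (ℂ × ℂ)) (γ t - γ T))
          linarith
      _ ≤ ε' * ((t - T) * d) + (t - T) * d / C + r * T := by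
          have := add_le_add (add_le_add h1 h2) hpstar1
          linarith
      _ = r * t := by
          have h3 : ε' * ((t - T) * d) + (t - T) * d / C = (t - T) * (d / C + ε' * d) := by
            ring
          rw [h3, hrsum]
          ring
  have htS : t ∈ S := by
    refine ⟨⟨le_trans hT01.1 hTt.le, ht1⟩, p, hbound, hGH⟩
  have : t ≤ T := le_csSup hbdd htS
  linarith
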